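/- Let G be a connected simple graph on a finite vertex set of N ≥ 2 vertices. With λ₂(M) := inf { xᵀMx : ‖x‖ = 1, x ⊥ 𝟙 } and λ_max(M) := sup { xᵀMx : ‖x‖ = 1 }, the eigenratio Q(s) := λ₂(L̃_Mell(s))/λ_max(L̃_Mell(s)) of the Mellin-transformed path Laplacian satisfies lim_{s→0⁺} Q(s) = 1 and lim_{s→∞} Q(s) = λ₂(L)/λ_max(L), where L is the ordinary graph Laplacian of G. -/

import Mathlib

open Finset Matrix Filter Real Topology

/-- The `d`-path Laplacian matrix of a graph `G` on `Fin N`: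
`(L_d)_{ii} = #{j : dist(i,j) = d}`, `(L_d)_{ij} = -1` if `i ≠ j` and `dist(i,j) = d`,
and `0` otherwise. -/
noncomputable def pathLaplacian {N : ℕ} (G : SimpleGraph (Fin N)) (d : ℕ) :
    Matrix (Fin N) (Fin N) ℝ := fun i j =>
  if i = j then ((univ.filter fun k => G.dist i k = d).card : ℝ)
  else if G.dist i j = d then -1 else 0

/-- The diameter `d_max` of `G`: the maximum shortest-path distance over all pairs. -/
noncomputable def graphDiam {N : ℕ} (G : SimpleGraph (Fin N)) : ℕ :=
  univ.sup fun p : Fin N × Fin N => G.dist p.1 p.2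

/-- The Mellin-transformed path Laplacian `L̃_Mell(s) = Σ_{d=1}^{d_max} d^{-s} L_d`. -/
noncomputable def mellinLap {N : ℕ} (G : SimpleGraph (Fin N)) (s : ℝ) :
    Matrix (Fin N) (Fin N) ℝ :=
  ∑ d ∈ Icc 1 (graphDiam G), (d : ℝ) ^ (-s) • pathLaplacian G d

/-- The Laplace-transformed path Laplacian `L̃_Lapl(λ) = L_1 + Σ_{d=2}^{d_max} e^{-λd} L_d`. -/
noncomputable def laplaceLap {N : ℕ} (G : SimpleGraph (Fin N)) (lam : ℝ) :
    Matrix (Fin N) (Fin N) ℝ :=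
  pathLaplacian G 1 + ∑ d ∈ Icc 2 (graphDiam G), Real.exp (-(lam * d)) • pathLaplacian G d

/-- `λ₂(M)`: infimum of the quadratic form over Euclidean-unit vectors orthogonal to
the all-ones vector. -/
noncomputable def lamTwo {N : ℕ} (M : Matrix (Fin N) (Fin N) ℝ) : ℝ :=
  sInf {r | ∃ x : Fin N → ℝ, ∑ i, x i ^ 2 = 1 ∧ ∑ i, x i = 0 ∧ r = x ⬝ᵥ M.mulVec x}

/-- `λ_max(M)`: supremum of the quadratic form over Euclidean-unit vectors. -/
noncomputable def lamMax {N : ℕ} (M : Matrix (Fin N) (Fin N) ℝ) : ℝ :=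
  sSup {r | ∃ x : Fin N → ℝ, ∑ i, x i ^ 2 = 1 ∧ r = x ⬝ᵥ M.mulVec x}

section Aux
variable {N : ℕ}

noncomputable def entC (M : Matrix (Fin N) (Fin N) ℝ) : ℝ := ∑ i, ∑ j, |M i j|

def setTwo (M : Matrix (Fin N) (Fin N) ℝ) : Set ℝ :=
  {r | ∃ x : Fin N → ℝ, ∑ i, x i ^ 2 = 1 ∧ ∑ i, x i = 0 ∧ r = x ⬝ᵥ M.mulVec x}

def setMax (M : Matrix (Fin N) (Fin N) ℝ) : Set ℝ :=
  {r | ∃ x : Fin N → ℝ, ∑ i, x i ^ 2 = 1 ∧ r = x ⬝ᵥ M.mulVec x}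

lemma lamTwo_eq (M : Matrix (Fin N) (Fin N) ℝ) : lamTwo M = sInf (setTwo M) := rfl
lemma lamMax_eq (M : Matrix (Fin N) (Fin N) ℝ) : lamMax M = sSup (setMax M) := rfl

lemma abs_le_one_of_unit {x : Fin N → ℝ} (hx : ∑ i, x i ^ 2 = 1) (i : Fin N) : |x i| ≤ 1 := by
  rw [← sq_le_one_iff_abs_le_one]
  calc x i ^ 2 ≤ ∑ j, x j ^ 2 :=
        Finset.single_le_sum (f := fun j => x j ^ 2) (fun j _ => sq_nonneg _) (mem_univ i)
    _ = 1 := hx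

lemma abs_quad_le (M : Matrix (Fin N) (Fin N) ℝ) {x : Fin N → ℝ} (hx : ∑ i, x i ^ 2 = 1) :
    |x ⬝ᵥ M.mulVec x| ≤ entC M := by
  have h1 : x ⬝ᵥ M.mulVec x = ∑ i, ∑ j, x i * (M i j * x j) := by
    simp [dotProduct, Matrix.mulVec, Finset.mul_sum]
  rw [h1, entC]
  refine (Finset.abs_sum_le_sum_abs _ _).trans (Finset.sum_le_sum fun i _ => ?_)
  refine (Finset.abs_sum_le_sum_abs _ _).trans (Finset.sum_le_sum fun j _ => ?_)
  rw [abs_mul, abs_mul]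
  calc |x i| * (|M i j| * |x j|) ≤ 1 * (|M i j| * 1) := by
        gcongr
        · exact abs_le_one_of_unit hx i
        · exact abs_le_one_of_unit hx j
    _ = |M i j| := by ring

lemma exists_witness (hN : 2 ≤ N) : ∃ x : Fin N → ℝ, (∑ i, x i ^ 2 = 1) ∧ ∑ i, x i = 0 := by
  have h0 : (0:ℕ) < N := by omega
  have h1 : (1:ℕ) < N := by omega
  set i0 : Fin N := ⟨0, h0⟩ with hi0
  set i1 : Fin N := ⟨1, h1⟩ with hi1
  have hne : i0 ≠ i1 := by simp [hi0, hi1, Fin.ext_iff]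
  set a : ℝ := (Real.sqrt 2)⁻¹ with ha
  have ha2 : a ^ 2 = 2⁻¹ := by
    rw [ha, inv_pow, Real.sq_sqrt (by norm_num : (2:ℝ) ≥ 0)]
  refine ⟨fun k => (if k = i0 then a else 0) + (if k = i1 then -a else 0), ?_, ?_⟩
  · have key : ∀ k : Fin N, ((if k = i0 then a else 0) + (if k = i1 then -a else 0)) ^ 2
        = (if k = i0 then a ^ 2 else 0) + (if k = i1 then a ^ 2 else 0) := by
      intro k
      by_cases h : k = i0
      · have h' : k ≠ i1 := by rw [h]; exact hne
        simp [h, h', if_neg hne]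
      · by_cases h' : k = i1
        · simp [h, h', if_neg (Ne.symm hne)]
        · simp [h, h']
    simp only [key]
    rw [Finset.sum_add_distrib, Finset.sum_ite_eq' univ i0, Finset.sum_ite_eq' univ i1]
    simp [ha2]; norm_num
  · rw [Finset.sum_add_distrib, Finset.sum_ite_eq' univ i0, Finset.sum_ite_eq' univ i1]
    simp

end Aux

section Aux2
variable {N : ℕ}

lemma setTwo_nonempty (hN : 2 ≤ N) (M : Matrix (Fin N) (Fin N) ℝ) : (setTwo M).Nonempty := by
  obtain ⟨x, hx1, hx2⟩ := exists_witness hN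
  exact ⟨_, x, hx1, hx2, rfl⟩

lemma setMax_nonempty (hN : 2 ≤ N) (M : Matrix (Fin N) (Fin N) ℝ) : (setMax M).Nonempty := by
  obtain ⟨x, hx1, _⟩ := exists_witness hN
  exact ⟨_, x, hx1, rfl⟩

lemma setTwo_bddBelow (M : Matrix (Fin N) (Fin N) ℝ) : BddBelow (setTwo M) := by
  refine ⟨-entC M, ?_⟩
  rintro r ⟨x, hx1, -, rfl⟩
  exact (abs_le.mp (abs_quad_le M hx1)).1

lemma setMax_bddAbove (M : Matrix (Fin N) (Fin N) ℝ) : BddAbove (setMax M) := by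
  refine ⟨entC M, ?_⟩
  rintro r ⟨x, hx1, rfl⟩
  exact le_of_abs_le (abs_quad_le M hx1)

lemma quad_sub (M M' : Matrix (Fin N) (Fin N) ℝ) (x : Fin N → ℝ) :
    x ⬝ᵥ M.mulVec x - x ⬝ᵥ M'.mulVec x = x ⬝ᵥ (M - M').mulVec x := by
  rw [Matrix.sub_mulVec, dotProduct_sub]

lemma lamTwo_le (hN : 2 ≤ N) (M M' : Matrix (Fin N) (Fin N) ℝ) :
    lamTwo M ≤ lamTwo M' + entC (M - M') := by
  have key : lamTwo M - entC (M - M') ≤ lamTwo M' := by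
    rw [lamTwo_eq M']
    apply le_csInf (setTwo_nonempty hN M')
    rintro r' ⟨x, hx1, hx2, rfl⟩
    have h1 : lamTwo M ≤ x ⬝ᵥ M.mulVec x := csInf_le (setTwo_bddBelow M) ⟨x, hx1, hx2, rfl⟩
    have h3 := abs_quad_le (M - M') hx1
    rw [← quad_sub] at h3
    have := (abs_le.mp h3).2
    linarith
  linarith

lemma entC_sub_comm (M M' : Matrix (Fin N) (Fin N) ℝ) : entC (M - M') = entC (M' - M) := by
  unfold entC
  congr 1; ext i; congr 1; ext j
  rw [Matrix.sub_apply, Matrix.sub_apply, abs_sub_comm]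

lemma abs_lamTwo_sub_le (hN : 2 ≤ N) (M M' : Matrix (Fin N) (Fin N) ℝ) :
    |lamTwo M - lamTwo M'| ≤ entC (M - M') := by
  rw [abs_sub_le_iff]
  constructor
  · linarith [lamTwo_le hN M M']
  · rw [entC_sub_comm]; linarith [lamTwo_le hN M' M]

lemma lamMax_le (hN : 2 ≤ N) (M M' : Matrix (Fin N) (Fin N) ℝ) :
    lamMax M ≤ lamMax M' + entC (M - M') := by
  rw [lamMax_eq M]
  apply csSup_le (setMax_nonempty hN M)
  rintro r ⟨x, hx1, rfl⟩
  have h1 : x ⬝ᵥ M'.mulVec x ≤ lamMax M' := le_csSup (setMax_bddAbove M') ⟨x, hx1, rfl⟩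
  have h3 := abs_quad_le (M - M') hx1
  rw [← quad_sub] at h3
  have := (abs_le.mp h3).2
  linarith

lemma abs_lamMax_sub_le (hN : 2 ≤ N) (M M' : Matrix (Fin N) (Fin N) ℝ) :
    |lamMax M - lamMax M'| ≤ entC (M - M') := by
  rw [abs_sub_le_iff]
  constructor
  · linarith [lamMax_le hN M M']
  · rw [entC_sub_comm]; linarith [lamMax_le hN M' M]

lemma tendsto_lam_of_entries {F : Filter ℝ} {Ms : ℝ → Matrix (Fin N) (Fin N) ℝ}
    {M₀ : Matrix (Fin N) (Fin N) ℝ} (hN : 2 ≤ N)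
    (h : ∀ i j, Tendsto (fun s => Ms s i j) F (𝓝 (M₀ i j))) :
    Tendsto (fun s => lamTwo (Ms s)) F (𝓝 (lamTwo M₀)) ∧
    Tendsto (fun s => lamMax (Ms s)) F (𝓝 (lamMax M₀)) := by
  have hC : Tendsto (fun s => entC (Ms s - M₀)) F (𝓝 0) := by
    have h2 : Tendsto (fun s => ∑ i : Fin N, ∑ j : Fin N, |Ms s i j - M₀ i j|) F
        (𝓝 (∑ _i : Fin N, ∑ _j : Fin N, (0:ℝ))) := by
      refine tendsto_finset_sum _ fun i _ => tendsto_finset_sum _ fun j _ => ?_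
      simpa using ((h i j).sub (tendsto_const_nhds (x := M₀ i j))).abs
    simpa [entC] using h2
  constructor
  · have h1 : Tendsto (fun s => lamTwo (Ms s) - lamTwo M₀) F (𝓝 0) :=
      squeeze_zero_norm (fun s => by
        simpa using abs_lamTwo_sub_le hN (Ms s) M₀) hC
    simpa using h1.add_const (lamTwo M₀)
  · have h1 : Tendsto (fun s => lamMax (Ms s) - lamMax M₀) F (𝓝 0) :=
      squeeze_zero_norm (fun s => by
        simpa using abs_lamMax_sub_le hN (Ms s) M₀) hC
    simpa using h1.add_const (lamMax M₀)

end Aux2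

section Aux3
variable {N : ℕ} (G : SimpleGraph (Fin N))

lemma dist_le_diam (i j : Fin N) : G.dist i j ≤ graphDiam G :=
  Finset.le_sup (f := fun p : Fin N × Fin N => G.dist p.1 p.2) (mem_univ (i, j))

lemma one_le_diam (hG : G.Connected) (hN : 2 ≤ N) : 1 ≤ graphDiam G := by
  have h0 : (0:ℕ) < N := by omega
  have h1 : (1:ℕ) < N := by omega
  have hne : (⟨0, h0⟩ : Fin N) ≠ ⟨1, h1⟩ := by simp [Fin.ext_iff]
  have := hG.pos_dist_of_ne hne
  have := dist_le_diam G ⟨0, h0⟩ ⟨1, h1⟩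
  omega

/-- the matrix N•I - J -/
noncomputable def KN (N : ℕ) : Matrix (Fin N) (Fin N) ℝ :=
  fun i j => if i = j then (N:ℝ) - 1 else -1

lemma sum_pathLap_eq (hG : G.Connected) (hN : 2 ≤ N) :
    ∑ d ∈ Icc 1 (graphDiam G), pathLaplacian G d = KN N := by
  ext i j
  rw [Matrix.sum_apply]
  by_cases h : i = j
  · subst h
    simp only [pathLaplacian, if_pos rfl, KN, if_true, eq_self_iff_true]
    rw [← Nat.cast_sum]
    have step : ∀ d ∈ Icc 1 (graphDiam G),
        ((univ.filter fun k : Fin N => k ≠ i).filter fun k => G.dist i k = d)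
          = univ.filter fun k => G.dist i k = d := by
      intro d hd
      rw [Finset.mem_Icc] at hd
      ext k
      simp only [Finset.mem_filter, Finset.mem_univ, true_and]
      constructor
      · rintro ⟨-, h⟩; exact h
      · intro hk
        refine ⟨?_, hk⟩
        rintro rfl
        rw [G.dist_self] at hk
        omega
    have fib : (univ.filter fun k : Fin N => k ≠ i).card
        = ∑ d ∈ Icc 1 (graphDiam G), (univ.filter fun k : Fin N => G.dist i k = d).card := by
      rw [Finset.card_eq_sum_card_fiberwise (f := fun k => G.dist i k)
        (t := Icc 1 (graphDiam G)) ?_]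
      · exact Finset.sum_congr rfl fun d hd => by rw [step d hd]
      · intro k hk
        rw [Finset.mem_coe, Finset.mem_filter] at hk
        rw [Finset.mem_coe, Finset.mem_Icc]
        exact ⟨hG.pos_dist_of_ne (Ne.symm hk.2), dist_le_diam G i k⟩
    rw [← fib]
    have : (univ.filter fun k : Fin N => k ≠ i) = univ.erase i := by
      ext k; simp [Finset.mem_erase]
    rw [this, Finset.card_erase_of_mem (mem_univ i), Finset.card_univ, Fintype.card_fin]
    rw [Nat.cast_sub (by omega)]
    simp
  · simp only [pathLaplacian, if_neg h, KN]
    rw [Finset.sum_ite_eq]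
    rw [if_pos]
    rw [Finset.mem_Icc]
    exact ⟨hG.pos_dist_of_ne h, dist_le_diam G i j⟩

lemma quad_KN (x : Fin N → ℝ) :
    x ⬝ᵥ (KN N).mulVec x = (N:ℝ) * (∑ i, x i ^ 2) - (∑ i, x i) ^ 2 := by
  have hmv : ∀ i, (KN N).mulVec x i = (N:ℝ) * x i - ∑ j, x j := by
    intro i
    simp only [Matrix.mulVec, dotProduct, KN]
    have : ∀ j ∈ univ, (if i = j then (N:ℝ) - 1 else -1) * x j
        = (if i = j then (N:ℝ) * x j else 0) - x j := by
      intro j _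
      by_cases h : i = j <;> simp [h] <;> ring
    rw [Finset.sum_congr rfl this, Finset.sum_sub_distrib, Finset.sum_ite_eq]
    simp
  simp only [dotProduct, hmv]
  have : ∀ i ∈ univ, x i * ((N:ℝ) * x i - ∑ j, x j)
      = (N:ℝ) * x i ^ 2 - (∑ j, x j) * x i := by intros; ring
  rw [Finset.sum_congr rfl this, Finset.sum_sub_distrib, ← Finset.mul_sum, ← Finset.mul_sum]
  ring

lemma lamTwo_KN (hN : 2 ≤ N) : lamTwo (KN N) = (N:ℝ) := by
  rw [lamTwo_eq]
  have hset : setTwo (KN N) = {(N:ℝ)} := by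
    ext r
    constructor
    · rintro ⟨x, hx1, hx2, rfl⟩
      rw [quad_KN, hx1, hx2]
      norm_num
    · rintro rfl
      obtain ⟨x, hx1, hx2⟩ := exists_witness hN
      refine ⟨x, hx1, hx2, ?_⟩
      rw [quad_KN, hx1, hx2]; norm_num
  rw [hset, csInf_singleton]

lemma lamMax_KN (hN : 2 ≤ N) : lamMax (KN N) = (N:ℝ) := by
  rw [lamMax_eq]
  apply le_antisymm
  · apply csSup_le (setMax_nonempty hN _)
    rintro r ⟨x, hx1, rfl⟩
    rw [quad_KN, hx1]
    nlinarith [sq_nonneg (∑ i, x i)]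
  · apply le_csSup (setMax_bddAbove _)
    obtain ⟨x, hx1, hx2⟩ := exists_witness hN
    refine ⟨x, hx1, ?_⟩
    rw [quad_KN, hx1, hx2]; norm_num

lemma pathLap_one [DecidableRel G.Adj] : pathLaplacian G 1 = G.lapMatrix ℝ := by
  ext i j
  by_cases h : i = j
  · subst h
    simp only [pathLaplacian, if_pos rfl]
    have : (univ.filter fun k => G.dist i k = 1) = G.neighborFinset i := by
      ext k
      simp [SimpleGraph.mem_neighborFinset, SimpleGraph.dist_eq_one_iff_adj]
    rw [this]
    rw [SimpleGraph.lapMatrix, Matrix.sub_apply, SimpleGraph.degMatrix,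
      Matrix.diagonal_apply_eq, SimpleGraph.adjMatrix_apply, if_neg (G.irrefl),
      SimpleGraph.degree]
    norm_num
  · simp only [pathLaplacian, if_neg h]
    rw [SimpleGraph.lapMatrix]
    rw [Matrix.sub_apply, SimpleGraph.degMatrix, Matrix.diagonal_apply_ne _ h,
      SimpleGraph.adjMatrix_apply]
    by_cases hadj : G.Adj i j
    · rw [if_pos (SimpleGraph.dist_eq_one_iff_adj.mpr hadj), if_pos hadj]
      norm_num
    · rw [if_neg (fun hd => hadj (SimpleGraph.dist_eq_one_iff_adj.mp hd)), if_neg hadj]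
      norm_num

lemma lamMax_lap_pos [DecidableRel G.Adj] (hG : G.Connected) (hN : 2 ≤ N) :
    0 < lamMax (G.lapMatrix ℝ) := by
  have h0 : (0:ℕ) < N := by omega
  have h1 : (1:ℕ) < N := by omega
  have hne : (⟨0, h0⟩ : Fin N) ≠ ⟨1, h1⟩ := by simp [Fin.ext_iff]
  have hadj : ∃ w, G.Adj ⟨0, h0⟩ w := by
    obtain ⟨p⟩ := hG.preconnected ⟨0, h0⟩ ⟨1, h1⟩
    exact ⟨_, (p.firstDart (SimpleGraph.Walk.not_nil_of_ne hne)).adj⟩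
  set i0 : Fin N := ⟨0, h0⟩
  set x : Fin N → ℝ := fun k => if k = i0 then 1 else 0 with hx
  have hx1 : ∑ i, x i ^ 2 = 1 := by
    simp only [hx]
    have : ∀ k : Fin N, ((if k = i0 then (1:ℝ) else 0)) ^ 2 = if k = i0 then 1 else 0 := by
      intro k; by_cases h : k = i0 <;> simp [h]
    simp only [this, Finset.sum_ite_eq' univ i0, if_pos (mem_univ i0)]
  have hquad : x ⬝ᵥ (G.lapMatrix ℝ).mulVec x = G.lapMatrix ℝ i0 i0 := by
    simp only [dotProduct, Matrix.mulVec, hx, ite_mul, one_mul, zero_mul]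
    rw [Finset.sum_ite_eq' univ i0, if_pos (mem_univ i0)]
    simp only [dotProduct, mul_ite, mul_one, mul_zero]
    rw [Finset.sum_ite_eq' univ i0, if_pos (mem_univ i0)]
  have hdeg : G.lapMatrix ℝ i0 i0 = (G.degree i0 : ℝ) := by
    simp [SimpleGraph.lapMatrix, SimpleGraph.degMatrix, SimpleGraph.adjMatrix,
      SimpleGraph.irrefl]
  have hdegpos : 0 < G.degree i0 := by
    rw [SimpleGraph.degree_pos_iff_exists_adj]
    exact hadj
  have hmem : (G.degree i0 : ℝ) ∈ setMax (G.lapMatrix ℝ) := ⟨x, hx1, by rw [hquad, hdeg]⟩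
  have := le_csSup (setMax_bddAbove (G.lapMatrix ℝ)) hmem
  rw [← lamMax_eq] at this
  calc (0:ℝ) < (G.degree i0 : ℝ) := by exact_mod_cast hdegpos
    _ ≤ _ := this

end Aux3

section Aux4
variable {N : ℕ} (G : SimpleGraph (Fin N))

lemma tendsto_mellin_entry {F : Filter ℝ} (c : ℕ → ℝ)
    (hc : ∀ d ∈ Icc 1 (graphDiam G), Tendsto (fun s : ℝ => (d:ℝ) ^ (-s)) F (𝓝 (c d)))
    (i j : Fin N) : Tendsto (fun s => mellinLap G s i j)
      F (𝓝 ((∑ d ∈ Icc 1 (graphDiam G), c d • pathLaplacian G d) i j)) := by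
  simp only [mellinLap, Matrix.sum_apply, Matrix.smul_apply, smul_eq_mul]
  exact tendsto_finset_sum _ fun d hd => (hc d hd).mul_const _

lemma coeff_tendsto_zero : ∀ d ∈ Icc 1 (graphDiam G),
    Tendsto (fun s : ℝ => (d:ℝ) ^ (-s)) (𝓝[>] (0:ℝ)) (𝓝 1) := by
  intro d hd
  rw [Finset.mem_Icc] at hd
  have hd0 : (0:ℝ) < (d:ℝ) := by exact_mod_cast by omega
  have hcont : ContinuousAt (fun s : ℝ => (d:ℝ) ^ s) 0 :=
    Real.continuousAt_const_rpow (ne_of_gt hd0)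
  have h1 : Tendsto (fun s : ℝ => (d:ℝ) ^ (-s)) (𝓝 0) (𝓝 ((d:ℝ) ^ (0:ℝ))) := by
    have hneg : Tendsto (fun s : ℝ => -s) (𝓝 (0:ℝ)) (𝓝 (0:ℝ)) := by
      simpa using continuous_neg.tendsto (0:ℝ)
    exact Filter.Tendsto.comp hcont.tendsto hneg
  simp only [Real.rpow_zero] at h1
  exact h1.mono_left nhdsWithin_le_nhds

lemma coeff_tendsto_top : ∀ d ∈ Icc 1 (graphDiam G),
    Tendsto (fun s : ℝ => (d:ℝ) ^ (-s)) atTop (𝓝 (if d = 1 then (1:ℝ) else 0)) := by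
  intro d hd
  rw [Finset.mem_Icc] at hd
  by_cases h1 : d = 1
  · subst h1
    simp only [Nat.cast_one, Real.one_rpow, if_pos rfl]
    exact tendsto_const_nhds
  · rw [if_neg h1]
    have hd2 : 2 ≤ d := by omega
    have hd0 : (0:ℝ) < (d:ℝ) := by positivity
    have hlog : 0 < Real.log d := Real.log_pos (by exact_mod_cast by omega)
    have ha : Tendsto (fun s : ℝ => Real.log d * s) atTop atTop :=
      Tendsto.const_mul_atTop hlog tendsto_id
    have hb : Tendsto (fun s : ℝ => -(Real.log d * s)) atTop atBot :=
      tendsto_neg_atTop_atBot.comp ha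
    have hc := Real.tendsto_exp_atBot.comp hb
    refine hc.congr fun s => ?_
    simp only [Function.comp]
    rw [Real.rpow_def_of_pos hd0, mul_neg]

end Aux4


/-- The eigenratio `Q(s) = λ₂(L̃_Mell(s))/λ_max(L̃_Mell(s))` satisfies
`lim_{s→0⁺} Q(s) = 1` and `lim_{s→∞} Q(s) = λ₂(L)/λ_max(L)`, where `L` is the ordinary
graph Laplacian of `G`. -/
theorem eigenratio_mellinLap_limits {N : ℕ} (G : SimpleGraph (Fin N)) [DecidableRel G.Adj]
    (hG : G.Connected) (hN : 2 ≤ N) :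
    Filter.Tendsto (fun s : ℝ => lamTwo (mellinLap G s) / lamMax (mellinLap G s))
        (𝓝[>] 0) (𝓝 1) ∧
      Filter.Tendsto (fun s : ℝ => lamTwo (mellinLap G s) / lamMax (mellinLap G s))
        Filter.atTop (𝓝 (lamTwo (G.lapMatrix ℝ) / lamMax (G.lapMatrix ℝ))) := by
  constructor
  · -- s → 0⁺
    have hM0 : ∑ d ∈ Icc 1 (graphDiam G), (1:ℝ) • pathLaplacian G d = KN N := by
      rw [← sum_pathLap_eq G hG hN]
      exact Finset.sum_congr rfl fun d _ => one_smul _ _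
    have hent : ∀ i j, Tendsto (fun s => mellinLap G s i j) (𝓝[>] (0:ℝ)) (𝓝 (KN N i j)) := by
      intro i j
      have := tendsto_mellin_entry G (fun _ => (1:ℝ)) (coeff_tendsto_zero G) i j
      rwa [hM0] at this
    obtain ⟨h2, hmax⟩ := tendsto_lam_of_entries hN hent
    rw [lamTwo_KN hN] at h2
    rw [lamMax_KN hN] at hmax
    have hNne : (N:ℝ) ≠ 0 := by positivity
    have := h2.div hmax hNne
    rwa [div_self hNne] at this
  · -- s → ∞
    have h1mem : (1:ℕ) ∈ Icc 1 (graphDiam G) :=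
      Finset.mem_Icc.mpr ⟨le_refl 1, one_le_diam G hG hN⟩
    have hM0 : ∑ d ∈ Icc 1 (graphDiam G), (if d = 1 then (1:ℝ) else 0) • pathLaplacian G d
        = G.lapMatrix ℝ := by
      rw [← pathLap_one G]
      have : ∀ d ∈ Icc 1 (graphDiam G), (if d = 1 then (1:ℝ) else 0) • pathLaplacian G d
          = if d = 1 then pathLaplacian G d else 0 := by
        intro d _
        by_cases h : d = 1 <;> simp [h]
      rw [Finset.sum_congr rfl this, Finset.sum_ite_eq' (Icc 1 (graphDiam G)) 1, if_pos h1mem]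
    have hent : ∀ i j, Tendsto (fun s => mellinLap G s i j) atTop (𝓝 (G.lapMatrix ℝ i j)) := by
      intro i j
      have := tendsto_mellin_entry G (fun d => if d = 1 then (1:ℝ) else 0)
        (coeff_tendsto_top G) i j
      rwa [hM0] at this
    obtain ⟨h2, hmax⟩ := tendsto_lam_of_entries hN hent
    exact h2.div hmax (ne_of_gt (lamMax_lap_pos G hG hN))
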